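/- For every n ≥ 1 and 1 ≤ k ≤ n, the set Γ_k^+ = {λ ∈ ℝ^n : σ_j(λ) > 0 for all j = 1, …, k} is an open convex cone: it is open in ℝ^n, convex, and satisfies tλ ∈ Γ_k^+ for all λ ∈ Γ_k^+ and t > 0. -/

import Mathlib

open Finset

/-- Elementary symmetric polynomial over an index subset. -/
noncomputable def sigA {n : ℕ} (A : Finset (Fin n)) (j : ℕ) (x : Fin n → ℝ) : ℝ :=
  ∑ s ∈ A.powersetCard j, ∏ i ∈ s, x i

lemma sigA_zero {n : ℕ} (A : Finset (Fin n)) (x : Fin n → ℝ) : sigA A 0 x = 1 := by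
  simp [sigA]

lemma sigA_of_card_lt {n : ℕ} {A : Finset (Fin n)} {j : ℕ} (h : A.card < j) (x : Fin n → ℝ) :
    sigA A j x = 0 := by
  rw [sigA, Finset.powersetCard_eq_empty.2 h, Finset.sum_empty]

lemma sigA_one {n : ℕ} (A : Finset (Fin n)) (x : Fin n → ℝ) : sigA A 1 x = ∑ i ∈ A, x i := by
  rw [sigA, Finset.powersetCard_one, Finset.sum_map]
  simp

lemma sigA_insert {n : ℕ} {A : Finset (Fin n)} {i : Fin n} (hi : i ∉ A) (j : ℕ)
    (x : Fin n → ℝ) :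
    sigA (insert i A) (j + 1) x = sigA A (j + 1) x + x i * sigA A j x := by
  rw [sigA, Finset.powersetCard_succ_insert hi, Finset.sum_union, Finset.sum_image]
  · congr 1
    rw [sigA, Finset.mul_sum]
    refine Finset.sum_congr rfl fun s hs => ?_
    have hs' : i ∉ s := fun hmem => hi ((Finset.mem_powersetCard.1 hs).1 hmem)
    rw [Finset.prod_insert hs']
  · intro s hs t ht hst
    have hs' : i ∉ s := fun hmem => hi ((Finset.mem_powersetCard.1 hs).1 hmem)
    have ht' : i ∉ t := fun hmem => hi ((Finset.mem_powersetCard.1 ht).1 hmem)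
    have := congrArg (fun u => Finset.erase u i) hst
    simpa [Finset.erase_insert hs', Finset.erase_insert ht'] using this
  · rw [Finset.disjoint_right]
    intro s hs hs'
    rcases Finset.mem_image.1 hs with ⟨t, ht, rfl⟩
    exact hi ((Finset.mem_powersetCard.1 hs').1 (Finset.mem_insert_self i t))

lemma sigA_erase {n : ℕ} {A : Finset (Fin n)} {i : Fin n} (hi : i ∈ A) (j : ℕ)
    (x : Fin n → ℝ) :
    sigA A (j + 1) x = sigA (A.erase i) (j + 1) x + x i * sigA (A.erase i) j x := by
  conv_lhs => rw [← Finset.insert_erase hi]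
  exact sigA_insert (Finset.notMem_erase i A) j x

lemma sigA_continuous {n : ℕ} (A : Finset (Fin n)) (j : ℕ) :
    Continuous (fun x : Fin n → ℝ => sigA A j x) := by
  unfold sigA
  exact continuous_finset_sum _ fun s _ => continuous_finset_prod _ fun i _ => continuous_apply i

lemma sigA_smul {n : ℕ} (A : Finset (Fin n)) (j : ℕ) (x : Fin n → ℝ) (t : ℝ) :
    sigA A j (t • x) = t ^ j * sigA A j x := by
  rw [sigA, sigA, Finset.mul_sum]
  refine Finset.sum_congr rfl fun s hs => ?_
  have hcard : s.card = j := (Finset.mem_powersetCard.1 hs).2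
  rw [← hcard, ← Finset.prod_const t, ← Finset.prod_mul_distrib]
  rfl

lemma sigA_const {n : ℕ} (A : Finset (Fin n)) (j : ℕ) (c : ℝ) :
    sigA A j (fun _ => c) = (A.card.choose j : ℝ) * c ^ j := by
  rw [sigA]
  have : ∀ s ∈ A.powersetCard j, (∏ _i ∈ s, c) = c ^ j := by
    intro s hs
    rw [Finset.prod_const, (Finset.mem_powersetCard.1 hs).2]
  rw [Finset.sum_congr rfl this, Finset.sum_const, Finset.card_powersetCard]
  simp [mul_comm]

lemma sigA_euler {n : ℕ} (A : Finset (Fin n)) (j : ℕ) (x : Fin n → ℝ) :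
    ∑ i ∈ A, x i * sigA (A.erase i) j x = (j + 1 : ℝ) * sigA A (j + 1) x := by
  have hL : ∑ i ∈ A, x i * sigA (A.erase i) j x
      = ∑ p ∈ A.sigma (fun i => (A.erase i).powersetCard j), x p.1 * ∏ l ∈ p.2, x l := by
    rw [Finset.sum_sigma]
    exact Finset.sum_congr rfl fun i _ => by rw [sigA, Finset.mul_sum]
  have hR : (j + 1 : ℝ) * sigA A (j + 1) x
      = ∑ p ∈ (A.powersetCard (j + 1)).sigma (fun t => t), ∏ l ∈ p.1, x l := by
    rw [Finset.sum_sigma, sigA, Finset.mul_sum]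
    refine Finset.sum_congr rfl fun t ht => ?_
    have : (∑ _s ∈ t, ∏ l ∈ t, x l) = (t.card : ℝ) * ∏ l ∈ t, x l := by
      rw [Finset.sum_const, nsmul_eq_mul]
    rw [this, (Finset.mem_powersetCard.1 ht).2]
    push_cast
    ring
  rw [hL, hR]
  refine Finset.sum_nbij' (fun p => ⟨insert p.1 p.2, p.1⟩) (fun p => ⟨p.2, p.1.erase p.2⟩)
    ?_ ?_ ?_ ?_ ?_
  · rintro ⟨i, s⟩ hp
    rw [Finset.mem_sigma] at hp
    obtain ⟨hiA, hs⟩ := hp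
    rw [Finset.mem_powersetCard] at hs
    rw [Finset.mem_sigma, Finset.mem_powersetCard]
    have his : i ∉ s := fun h => (Finset.mem_erase.1 (hs.1 h)).1 rfl
    refine ⟨⟨?_, ?_⟩, Finset.mem_insert_self i s⟩
    · intro l hl
      rcases Finset.mem_insert.1 hl with rfl | hl
      · exact hiA
      · exact Finset.mem_of_mem_erase (hs.1 hl)
    · rw [Finset.card_insert_of_notMem his, hs.2]
  · rintro ⟨t, i⟩ hp
    rw [Finset.mem_sigma] at hp
    obtain ⟨ht, hit⟩ := hp
    rw [Finset.mem_powersetCard] at ht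
    rw [Finset.mem_sigma, Finset.mem_powersetCard]
    refine ⟨ht.1 hit, ?_, ?_⟩
    · intro l hl
      rw [Finset.mem_erase] at hl ⊢
      exact ⟨hl.1, ht.1 hl.2⟩
    · rw [Finset.card_erase_of_mem hit, ht.2]
      rfl
  · rintro ⟨i, s⟩ hp
    rw [Finset.mem_sigma] at hp
    have his : i ∉ s := fun h => (Finset.mem_erase.1 ((Finset.mem_powersetCard.1 hp.2).1 h)).1 rfl
    simp [Finset.erase_insert his]
  · rintro ⟨t, i⟩ hp
    rw [Finset.mem_sigma] at hp
    simp [Finset.insert_erase hp.2]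
  · rintro ⟨i, s⟩ hp
    rw [Finset.mem_sigma] at hp
    have his : i ∉ s := fun h => (Finset.mem_erase.1 ((Finset.mem_powersetCard.1 hp.2).1 h)).1 rfl
    simp [Finset.prod_insert his]

lemma sigA_affine {n : ℕ} (A : Finset (Fin n)) (a b : ℝ) (x : Fin n → ℝ) (j : ℕ) :
    sigA A j (fun i => a * x i + b)
      = ∑ m ∈ Finset.range (j + 1),
          ((A.card - m).choose (j - m) : ℝ) * a ^ m * b ^ (j - m) * sigA A m x := by
  induction A using Finset.induction_on generalizing j with
  | empty =>
    cases j with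
    | zero => simp [sigA_zero]
    | succ jj =>
      rw [sigA_of_card_lt (by simp) _]
      symm
      refine Finset.sum_eq_zero fun m hm => ?_
      cases m with
      | zero => simp [Nat.choose_eq_zero_of_lt (Nat.succ_pos jj)]
      | succ mm => rw [sigA_of_card_lt (by simp) _]; ring
  | @insert i A hi IH =>
    cases j with
    | zero => simp [sigA_zero]
    | succ jj =>
      have hcard : (insert i A).card = A.card + 1 := Finset.card_insert_of_notMem hi
      rw [sigA_insert hi, IH (jj + 1), IH jj]
      have hRHS : ∑ m ∈ Finset.range (jj + 2),
            (((insert i A).card - m).choose (jj + 1 - m) : ℝ) * a ^ m * b ^ (jj + 1 - m)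
              * sigA (insert i A) m x
          = (∑ m ∈ Finset.range (jj + 2),
              ((A.card + 1 - m).choose (jj + 1 - m) : ℝ) * a ^ m * b ^ (jj + 1 - m)
                * sigA A m x)
            + ∑ m ∈ Finset.range (jj + 1),
              ((A.card - m).choose (jj - m) : ℝ) * a ^ (m + 1) * b ^ (jj - m)
                * (x i * sigA A m x) := by
        have step : ∀ m ∈ Finset.range (jj + 2),
            (((insert i A).card - m).choose (jj + 1 - m) : ℝ) * a ^ m * b ^ (jj + 1 - m)
              * sigA (insert i A) m x
            = ((A.card + 1 - m).choose (jj + 1 - m) : ℝ) * a ^ m * b ^ (jj + 1 - m)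
                * sigA A m x
              + (if m = 0 then 0 else
                  ((A.card + 1 - m).choose (jj + 1 - m) : ℝ) * a ^ m * b ^ (jj + 1 - m)
                    * (x i * sigA A (m - 1) x)) := by
          intro m _
          cases m with
          | zero => rw [if_pos rfl, hcard, sigA_zero, sigA_zero]; ring
          | succ mm =>
            rw [if_neg (Nat.succ_ne_zero mm), sigA_insert hi mm x, hcard,
              Nat.add_sub_cancel]
            ring
        rw [Finset.sum_congr rfl step, Finset.sum_add_distrib]
        congr 1
        have hsucc : ∑ m ∈ Finset.range (jj + 2),
            (if m = 0 then (0:ℝ) else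
              ((A.card + 1 - m).choose (jj + 1 - m) : ℝ) * a ^ m * b ^ (jj + 1 - m)
                * (x i * sigA A (m - 1) x))
          = (∑ m ∈ Finset.range (jj + 1),
              (if m + 1 = 0 then (0:ℝ) else
              ((A.card + 1 - (m + 1)).choose (jj + 1 - (m + 1)) : ℝ) * a ^ (m + 1)
                * b ^ (jj + 1 - (m + 1)) * (x i * sigA A (m + 1 - 1) x)))
            + (if (0:ℕ) = 0 then (0:ℝ) else
              ((A.card + 1 - 0).choose (jj + 1 - 0) : ℝ) * a ^ 0 * b ^ (jj + 1 - 0)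
                * (x i * sigA A (0 - 1) x)) :=
          Finset.sum_range_succ' _ (jj + 1)
        rw [hsucc, if_pos rfl, add_zero]
        refine Finset.sum_congr rfl fun m hm => ?_
        rw [if_neg (Nat.succ_ne_zero m)]
        have h1 : A.card + 1 - (m + 1) = A.card - m := by omega
        have h2 : jj + 1 - (m + 1) = jj - m := by omega
        rw [h1, h2, Nat.add_sub_cancel]
      rw [hRHS]
      have hLHS : (a * x i + b) * ∑ m ∈ Finset.range (jj + 1),
            ((A.card - m).choose (jj - m) : ℝ) * a ^ m * b ^ (jj - m) * sigA A m x
          = (∑ m ∈ Finset.range (jj + 1),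
              ((A.card - m).choose (jj - m) : ℝ) * a ^ (m + 1) * b ^ (jj - m)
                * (x i * sigA A m x))
            + ∑ m ∈ Finset.range (jj + 1),
              ((A.card - m).choose (jj - m) : ℝ) * a ^ m * b ^ (jj + 1 - m) * sigA A m x := by
        rw [Finset.mul_sum, ← Finset.sum_add_distrib]
        refine Finset.sum_congr rfl fun m hm => ?_
        have h2 : jj + 1 - m = (jj - m) + 1 := by
          have := Finset.mem_range.1 hm; omega
        rw [h2]
        ring
      rw [hLHS]
      have hP : (∑ m ∈ Finset.range (jj + 2),
            ((A.card - m).choose (jj + 1 - m) : ℝ) * a ^ m * b ^ (jj + 1 - m) * sigA A m x)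
          + ∑ m ∈ Finset.range (jj + 1),
            ((A.card - m).choose (jj - m) : ℝ) * a ^ m * b ^ (jj + 1 - m) * sigA A m x
          = ∑ m ∈ Finset.range (jj + 2),
            ((A.card + 1 - m).choose (jj + 1 - m) : ℝ) * a ^ m * b ^ (jj + 1 - m)
              * sigA A m x := by
        have e1 : ∑ m ∈ Finset.range (jj + 2),
            ((A.card - m).choose (jj + 1 - m) : ℝ) * a ^ m * b ^ (jj + 1 - m) * sigA A m x
          = (∑ m ∈ Finset.range (jj + 1),
              ((A.card - m).choose (jj + 1 - m) : ℝ) * a ^ m * b ^ (jj + 1 - m) * sigA A m x)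
            + ((A.card - (jj + 1)).choose (jj + 1 - (jj + 1)) : ℝ) * a ^ (jj + 1)
              * b ^ (jj + 1 - (jj + 1)) * sigA A (jj + 1) x :=
          Finset.sum_range_succ _ (jj + 1)
        have e3 : ∑ m ∈ Finset.range (jj + 2),
            ((A.card + 1 - m).choose (jj + 1 - m) : ℝ) * a ^ m * b ^ (jj + 1 - m) * sigA A m x
          = (∑ m ∈ Finset.range (jj + 1),
              ((A.card + 1 - m).choose (jj + 1 - m) : ℝ) * a ^ m * b ^ (jj + 1 - m)
                * sigA A m x)
            + ((A.card + 1 - (jj + 1)).choose (jj + 1 - (jj + 1)) : ℝ) * a ^ (jj + 1)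
              * b ^ (jj + 1 - (jj + 1)) * sigA A (jj + 1) x :=
          Finset.sum_range_succ _ (jj + 1)
        rw [e1, e3, Nat.sub_self, Nat.choose_zero_right, Nat.choose_zero_right]
        rw [add_right_comm]
        congr 1
        rw [← Finset.sum_add_distrib]
        refine Finset.sum_congr rfl fun m hm => ?_
        have hmr := Finset.mem_range.1 hm
        by_cases hmc : m ≤ A.card
        · have h1 : A.card + 1 - m = (A.card - m) + 1 := by omega
          have h2 : jj + 1 - m = (jj - m) + 1 := by omega
          rw [h1, h2, Nat.choose_succ_succ (A.card - m) (jj - m)]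
          push_cast
          ring
        · rw [sigA_of_card_lt (by omega) x]
          ring
      calc (∑ m ∈ Finset.range (jj + 2),
            ((A.card - m).choose (jj + 1 - m) : ℝ) * a ^ m * b ^ (jj + 1 - m) * sigA A m x)
            + ((∑ m ∈ Finset.range (jj + 1),
              ((A.card - m).choose (jj - m) : ℝ) * a ^ (m + 1) * b ^ (jj - m)
                * (x i * sigA A m x))
            + ∑ m ∈ Finset.range (jj + 1),
              ((A.card - m).choose (jj - m) : ℝ) * a ^ m * b ^ (jj + 1 - m) * sigA A m x)
          = ((∑ m ∈ Finset.range (jj + 2),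
            ((A.card - m).choose (jj + 1 - m) : ℝ) * a ^ m * b ^ (jj + 1 - m) * sigA A m x)
            + ∑ m ∈ Finset.range (jj + 1),
              ((A.card - m).choose (jj - m) : ℝ) * a ^ m * b ^ (jj + 1 - m) * sigA A m x)
            + ∑ m ∈ Finset.range (jj + 1),
              ((A.card - m).choose (jj - m) : ℝ) * a ^ (m + 1) * b ^ (jj - m)
                * (x i * sigA A m x) := by ring
        _ = _ := by rw [hP]

namespace NewtonAux

open Multiset Polynomial

lemma esymm_cons (a : ℝ) (s : Multiset ℝ) (k : ℕ) :
    (a ::ₘ s).esymm (k + 1) = s.esymm (k + 1) + a * s.esymm k := by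
  rw [Multiset.esymm, Multiset.powersetCard_cons, Multiset.map_add, Multiset.sum_add,
    Multiset.map_map, Multiset.esymm, Multiset.esymm]
  congr 1
  have h : ((fun t : Multiset ℝ => t.prod) ∘ Multiset.cons a) = fun t : Multiset ℝ => a * t.prod := by
    funext t; simp [Multiset.prod_cons]
  rw [h, ← Multiset.sum_map_mul_left]

lemma esymm_one' (s : Multiset ℝ) : s.esymm 1 = s.sum := by
  rw [Multiset.esymm, Multiset.powersetCard_one, Multiset.map_map]
  simp [Function.comp]

lemma esymm_eq_zero_of_lt {s : Multiset ℝ} {k : ℕ} (h : Multiset.card s < k) :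
    s.esymm k = 0 := by
  rw [Multiset.esymm, show k = Multiset.card s + (k - Multiset.card s) by omega,
    Multiset.powersetCard_card_add _ (by omega)]
  simp

lemma two_esymm_two (s : Multiset ℝ) :
    2 * s.esymm 2 = s.sum ^ 2 - (s.map (fun y => y ^ 2)).sum := by
  induction s using Multiset.induction_on with
  | empty => simp [Multiset.esymm, Multiset.powersetCard_eq_empty 2 (by simp : Multiset.card (0 : Multiset ℝ) < 2)]
  | cons a s ih =>
    have h2 : (a ::ₘ s).esymm 2 = s.esymm 2 + a * s.esymm 1 := esymm_cons a s 1
    rw [h2, esymm_one', Multiset.sum_cons, Multiset.map_cons, Multiset.sum_cons]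
    nlinarith [ih]

lemma powersetCard_card (s : Multiset ℝ) : s.powersetCard (Multiset.card s) = {s} := by
  induction s using Multiset.induction_on with
  | empty => simp [Multiset.powersetCard_zero_left]
  | cons a s ih =>
    rw [Multiset.card_cons, Multiset.powersetCard_cons,
      Multiset.powersetCard_card_add s (Nat.succ_pos 0), ih]
    simp

lemma esymm_two_scale (a : ℝ) (Q : Multiset ℝ) :
    (Q.map (fun q => a * q)).esymm 2 = a ^ 2 * Q.esymm 2 := by
  have h1 := two_esymm_two (Q.map (fun q => a * q))
  have h2 := two_esymm_two Q
  have hs : (Q.map (fun q => a * q)).sum = a * Q.sum := by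
    rw [Multiset.sum_map_mul_left]; simp
  have hsq : ((Q.map (fun q => a * q)).map (fun y => y ^ 2)).sum
      = a ^ 2 * (Q.map (fun y => y ^ 2)).sum := by
    rw [Multiset.map_map]
    have h : ((fun y : ℝ => y ^ 2) ∘ fun q => a * q) = fun q : ℝ => a ^ 2 * q ^ 2 := by
      funext q; simp only [Function.comp_apply]; ring
    rw [h, ← Multiset.sum_map_mul_left]
  rw [hs, hsq] at h1
  nlinarith [h1, h2, sq_nonneg a, sq_nonneg (a*Q.sum)]

lemma pe2 (r : Multiset ℝ) (m : ℕ) (hc : Multiset.card r = m + 2) :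
    ((r.powersetCard (m + 1)).map Multiset.prod).esymm 2 = r.esymm m * r.prod := by
  induction r using Multiset.induction_on generalizing m with
  | empty => simp at hc
  | cons a s ih =>
    rw [Multiset.card_cons] at hc
    have hcs : Multiset.card s = m + 1 := by omega
    cases m with
    | zero =>
      have key : ((a ::ₘ s).powersetCard 1).map Multiset.prod = a ::ₘ s := by
        rw [Multiset.powersetCard_one, Multiset.map_map]
        simp [Function.comp]
      rw [key, show (2:ℕ) = 1 + 1 from rfl, esymm_cons, esymm_one']
      rw [esymm_eq_zero_of_lt (by omega), Multiset.esymm, Multiset.powersetCard_zero_left]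
      have hsum : s.sum = s.prod := by
        obtain ⟨b, rfl⟩ := Multiset.card_eq_one.1 hcs
        simp
      simp [Multiset.prod_cons, hsum]
    | succ mm =>
      have key : ((a ::ₘ s).powersetCard (mm + 2)).map Multiset.prod
          = s.prod ::ₘ (((s.powersetCard (mm + 1)).map Multiset.prod).map (fun q => a * q)) := by
        rw [Multiset.powersetCard_cons, Multiset.map_add,
          show mm + 2 = Multiset.card s from hcs.symm, powersetCard_card]
        rw [Multiset.map_map, Multiset.map_map]
        have h : (Multiset.prod ∘ Multiset.cons a) = (fun q : ℝ => a * q) ∘ Multiset.prod := by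
          funext t; simp [Multiset.prod_cons]
        rw [h]
        simp
      rw [key, show (2:ℕ) = 1 + 1 from rfl, esymm_cons, esymm_one', esymm_two_scale,
        Multiset.sum_map_mul_left]
      have hQ : ((s.powersetCard (mm + 1)).map Multiset.prod).sum = s.esymm (mm + 1) := rfl
      have hQ2 := ih mm hcs
      rw [hQ2]
      simp only [Multiset.map_id']
      rw [hQ, esymm_cons, Multiset.prod_cons]
      ring


lemma esymm_card (s : Multiset ℝ) : s.esymm (Multiset.card s) = s.prod := by
  rw [Multiset.esymm, powersetCard_card]
  simp

lemma newton_top (r : Multiset ℝ) (m : ℕ) (hc : Multiset.card r = m + 2)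
    (h0 : r.esymm (m + 1) = 0) : r.esymm m * r.prod ≤ 0 := by
  have hq := pe2 r m hc
  have hsum : ((r.powersetCard (m + 1)).map Multiset.prod).sum = 0 := h0
  have h2 := two_esymm_two ((r.powersetCard (m + 1)).map Multiset.prod)
  rw [hsum] at h2
  have hnn : (0:ℝ) ≤ ((((r.powersetCard (m + 1)).map Multiset.prod)).map (fun y => y ^ 2)).sum := by
    apply Multiset.sum_nonneg
    intro z hz
    rcases Multiset.mem_map.1 hz with ⟨q, _, rfl⟩
    exact sq_nonneg q
  nlinarith [hq, h2, hnn]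

lemma card_roots_le_iterate (d : ℕ) (p : ℝ[X]) :
    Multiset.card p.roots ≤ Multiset.card ((Polynomial.derivative)^[d] p).roots + d := by
  induction d generalizing p with
  | zero => simp
  | succ dd ih =>
    calc Multiset.card p.roots ≤ Multiset.card (Polynomial.derivative p).roots + 1 :=
          Polynomial.card_roots_le_derivative p
    _ ≤ (Multiset.card ((Polynomial.derivative)^[dd] (Polynomial.derivative p)).roots + dd) + 1 :=
          Nat.add_le_add_right (ih (Polynomial.derivative p)) 1
    _ = Multiset.card ((Polynomial.derivative)^[dd + 1] p).roots + (dd + 1) := by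
          rw [Function.iterate_succ_apply]; ring

/-- Newton's inequality consequence: if an intermediate elementary symmetric function
vanishes, the product of its neighbours is nonpositive. -/
theorem newton_use (N : Multiset ℝ) (j : ℕ) (hj : 1 ≤ j)
    (hcard : j + 1 ≤ Multiset.card N) (h0 : N.esymm j = 0) :
    N.esymm (j - 1) * N.esymm (j + 1) ≤ 0 := by
  set m := Multiset.card N with hm
  set d := m - (j + 1) with hd
  have hmd : m = j + 1 + d := by omega
  set f : ℝ[X] := (N.map (fun a => Polynomial.X + Polynomial.C a)).prod with hf
  have hmonic : f.Monic :=
    Polynomial.monic_multiset_prod_of_monic N _ (fun a _ => Polynomial.monic_X_add_C a)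
  have hdegf : f.natDegree = m := by
    rw [hf, Polynomial.natDegree_multiset_prod_of_monic]
    · rw [Multiset.map_map]
      have : ((Polynomial.natDegree ∘ fun a : ℝ => Polynomial.X + Polynomial.C a)) = fun _ => 1 := by
        funext a; simp [Polynomial.natDegree_X_add_C]
      rw [this, Multiset.map_const', Multiset.sum_replicate, smul_eq_mul, mul_one, hm]
    · intro p hp
      rcases Multiset.mem_map.1 hp with ⟨a, _, rfl⟩
      exact Polynomial.monic_X_add_C a
  have hcoefff : ∀ t : ℕ, t ≤ m → f.coeff t = N.esymm (m - t) := by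
    intro t ht
    exact Multiset.prod_X_add_C_coeff N ht
  have hrootsf : f.roots = N.map (fun a => -a) := by
    have : f = ((N.map (fun a => -a)).map (fun a => Polynomial.X - Polynomial.C a)).prod := by
      rw [hf, Multiset.map_map]
      congr 1
      apply Multiset.map_congr rfl
      intro a _
      simp [sub_neg_eq_add]
    rw [this, Polynomial.roots_multiset_prod_X_sub_C]
  have hcardrootsf : Multiset.card f.roots = m := by rw [hrootsf]; simp [hm]
  set g : ℝ[X] := (Polynomial.derivative)^[d] f with hg
  have hcoeffg : ∀ t : ℕ, g.coeff t = ((t + d).descFactorial d : ℝ) * f.coeff (t + d) := by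
    intro t
    rw [hg, Polynomial.coeff_iterate_derivative, nsmul_eq_mul]
  have hlead : g.coeff (j + 1) = ((j + 1 + d).descFactorial d : ℝ) := by
    rw [hcoeffg, hcoefff (j + 1 + d) (by omega), show m - (j + 1 + d) = 0 by omega]
    simp [Multiset.esymm]
  have hleadpos : (0:ℝ) < ((j + 1 + d).descFactorial d : ℝ) := by
    have hne : (j + 1 + d).descFactorial d ≠ 0 := by
      rw [Ne, Nat.descFactorial_eq_zero_iff_lt]
      omega
    exact_mod_cast Nat.pos_of_ne_zero hne
  have hdegg : g.natDegree = j + 1 := by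
    have hle : g.natDegree ≤ j + 1 := by
      have h := Polynomial.natDegree_iterate_derivative f d
      rw [hdegf, ← hg] at h
      omega
    have hge : j + 1 ≤ g.natDegree := by
      apply Polynomial.le_natDegree_of_ne_zero
      rw [hlead]
      exact ne_of_gt hleadpos
    omega
  have hcardg : Multiset.card g.roots = j + 1 := by
    have h1 : Multiset.card g.roots ≥ j + 1 := by
      have h := card_roots_le_iterate d f
      rw [hcardrootsf, ← hg] at h
      omega
    have h2 : Multiset.card g.roots ≤ j + 1 := by
      have := Polynomial.card_roots' g
      omega
    omega
  have hsplits : Polynomial.Splits g :=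
    Polynomial.splits_iff_card_roots.2 (by rw [hcardg, hdegg])
  set r := g.roots with hr
  have hesymm : ∀ t : ℕ, t ≤ j + 1 →
      g.coeff t = g.leadingCoeff * (-1) ^ (j + 1 - t) * r.esymm (j + 1 - t) := by
    intro t ht
    have := Polynomial.coeff_eq_esymm_roots_of_splits hsplits (k := t) (by omega : t ≤ g.natDegree)
    rw [hdegg] at this
    exact this
  have hleadg : g.leadingCoeff = ((j + 1 + d).descFactorial d : ℝ) := by
    rw [Polynomial.leadingCoeff, hdegg, hlead]
  -- r.esymm j = 0
  have hrj : r.esymm j = 0 := by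
    have e1 := hesymm 1 (by omega)
    have e1' : g.coeff 1 = 0 := by
      rw [hcoeffg, hcoefff (1 + d) (by omega), show m - (1 + d) = j by omega, h0, mul_zero]
    rw [e1', hleadg] at e1
    have hpow : ((-1:ℝ) ^ (j + 1 - 1)) ≠ 0 := pow_ne_zero _ (by norm_num)
    have := e1.symm
    rcases mul_eq_zero.1 this with h | h
    · rcases mul_eq_zero.1 h with h' | h'
      · exact absurd h' (ne_of_gt hleadpos)
      · exact absurd h' hpow
    · simpa using h
  -- newton_top on r
  have hcr : Multiset.card r = (j - 1) + 2 := by rw [hcardg]; omega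
  have hnt := newton_top r (j - 1) hcr (by rw [show j - 1 + 1 = j by omega]; exact hrj)
  -- translate back
  have hprod : r.prod = r.esymm (j + 1) := by
    rw [← esymm_card r, hcardg]
  rw [hprod] at hnt
  -- esymm (j-1) r from coeff 2, esymm (j+1) r from coeff 0
  have e2 := hesymm 2 (by omega)
  have e0 := hesymm 0 (by omega)
  have c2' : g.coeff 2 = (((2 + d).descFactorial d : ℕ) : ℝ) * N.esymm (j - 1) := by
    rw [hcoeffg, hcoefff (2 + d) (by omega), show m - (2 + d) = j - 1 by omega]
  have c0' : g.coeff 0 = (((0 + d).descFactorial d : ℕ) : ℝ) * N.esymm (j + 1) := by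
    rw [hcoeffg, hcoefff (0 + d) (by omega), show m - (0 + d) = j + 1 by omega]
  have hc2pos : (0:ℝ) < (((2 + d).descFactorial d : ℕ) : ℝ) := by
    have hne : (2 + d).descFactorial d ≠ 0 := by
      rw [Ne, Nat.descFactorial_eq_zero_iff_lt]; omega
    exact_mod_cast Nat.pos_of_ne_zero hne
  have hc0pos : (0:ℝ) < (((0 + d).descFactorial d : ℕ) : ℝ) := by
    have hne : (0 + d).descFactorial d ≠ 0 := by
      rw [Ne, Nat.descFactorial_eq_zero_iff_lt]; omega
    exact_mod_cast Nat.pos_of_ne_zero hne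
  -- product equation
  have hsign : ((-1:ℝ) ^ (j - 1)) * ((-1:ℝ) ^ (j + 1)) = 1 := by
    rw [← pow_add, show (j - 1) + (j + 1) = 2 * j by omega, pow_mul, neg_one_sq, one_pow]
  have hprodeq : (((2 + d).descFactorial d : ℕ) : ℝ) * (((0 + d).descFactorial d : ℕ) : ℝ)
      * (N.esymm (j - 1) * N.esymm (j + 1))
      = g.leadingCoeff ^ 2 * (r.esymm (j - 1) * r.esymm (j + 1)) := by
    have h2 : (((2 + d).descFactorial d : ℕ) : ℝ) * N.esymm (j - 1)
        = g.leadingCoeff * (-1) ^ (j + 1 - 2) * r.esymm (j + 1 - 2) := by rw [← c2', e2]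
    have h0' : (((0 + d).descFactorial d : ℕ) : ℝ) * N.esymm (j + 1)
        = g.leadingCoeff * (-1) ^ (j + 1 - 0) * r.esymm (j + 1 - 0) := by rw [← c0', e0]
    have hj2 : j + 1 - 2 = j - 1 := by omega
    have hj0 : j + 1 - 0 = j + 1 := by omega
    rw [hj2] at h2
    rw [hj0] at h0'
    calc (((2 + d).descFactorial d : ℕ) : ℝ) * (((0 + d).descFactorial d : ℕ) : ℝ)
        * (N.esymm (j - 1) * N.esymm (j + 1))
        = ((((2 + d).descFactorial d : ℕ) : ℝ) * N.esymm (j - 1))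
          * ((((0 + d).descFactorial d : ℕ) : ℝ) * N.esymm (j + 1)) := by ring
      _ = (g.leadingCoeff * (-1) ^ (j - 1) * r.esymm (j - 1))
          * (g.leadingCoeff * (-1) ^ (j + 1) * r.esymm (j + 1)) := by rw [h2, h0']
      _ = g.leadingCoeff ^ 2 * (r.esymm (j - 1) * r.esymm (j + 1))
          * (((-1:ℝ) ^ (j - 1)) * ((-1:ℝ) ^ (j + 1))) := by ring
      _ = g.leadingCoeff ^ 2 * (r.esymm (j - 1) * r.esymm (j + 1)) := by rw [hsign, mul_one]
  have hL2 : (0:ℝ) < g.leadingCoeff ^ 2 := by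
    rw [hleadg]
    positivity
  nlinarith [hprodeq, hnt, hc2pos, hc0pos, hL2, mul_pos hc2pos hc0pos]


end NewtonAux

lemma sigA_newton {n : ℕ} {B : Finset (Fin n)} {x : Fin n → ℝ} {j : ℕ} (hj : 1 ≤ j)
    (hc : j + 1 ≤ B.card) (h0 : sigA B j x = 0) :
    sigA B (j - 1) x * sigA B (j + 1) x ≤ 0 := by
  have hb : ∀ l : ℕ, sigA B l x = (B.val.map x).esymm l := fun l =>
    (Finset.esymm_map_val x B l).symm
  have hcard : Multiset.card (B.val.map x) = B.card := by
    rw [Multiset.card_map]; rfl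
  rw [hb, hb]
  exact NewtonAux.newton_use _ j hj (by rw [hcard]; exact hc) (by rw [← hb]; exact h0)

/-- The Gårding cone predicate relative to an index set. -/
def GS {n : ℕ} (A : Finset (Fin n)) (k : ℕ) (x : Fin n → ℝ) : Prop :=
  ∀ j : ℕ, 1 ≤ j → j ≤ k → 0 < sigA A j x

lemma GS.mono {n : ℕ} {A : Finset (Fin n)} {k k' : ℕ} {x : Fin n → ℝ}
    (h : GS A k x) (hk : k' ≤ k) : GS A k' x :=
  fun j h1 h2 => h j h1 (h2.trans hk)

lemma GS.card_le {n : ℕ} {A : Finset (Fin n)} {k : ℕ} {x : Fin n → ℝ}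
    (h : GS A k x) (hk : 1 ≤ k) : k ≤ A.card := by
  by_contra hc
  have := h k hk le_rfl
  rw [sigA_of_card_lt (by omega) x] at this
  exact lt_irrefl 0 this

lemma GS_smul {n : ℕ} {A : Finset (Fin n)} {k : ℕ} {x : Fin n → ℝ} {t : ℝ}
    (ht : 0 < t) (h : GS A k x) : GS A k (t • x) := fun j h1 h2 => by
  rw [sigA_smul]
  exact mul_pos (pow_pos ht j) (h j h1 h2)

/-- Deletion lemma: membership in `Γ_k` implies the deleted tuples lie in `Γ_{k-1}`. -/
lemma GS_del {n : ℕ} : ∀ (k : ℕ) {A : Finset (Fin n)} {x : Fin n → ℝ} {i : Fin n},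
    GS A k x → i ∈ A → GS (A.erase i) (k - 1) x := by
  intro k
  induction k using Nat.strong_induction_on with
  | _ k IH =>
    intro A x i hx hi
    match k, IH with
    | 0, _ => intro j h1 h2; omega
    | 1, _ => intro j h1 h2; omega
    | (kk+2), IH =>
      -- goal : GS (A.erase i) (kk+1) x
      set k := kk + 2 with hk
      intro j hj1 hjk
      rcases Nat.lt_or_ge j (kk + 1) with hjlt | hjge
      · -- j ≤ kk : use IH at level k-1
        have hxk1 : GS A (kk + 1) x := hx.mono (by omega)
        have := IH (kk + 1) (by omega) hxk1 hi
        exact this j hj1 (by omega)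
      · have hjeq : j = kk + 1 := by omega
        subst hjeq
        -- main case : show 0 < sigA (A.erase i) (kk+1) x
        by_contra hle
        push_neg at hle
        -- the path s ↦ (1-s) • x + s • 1
        set φ : ℝ → ℝ := fun s => sigA (A.erase i) (kk + 1) (fun l => (1 - s) * x l + s)
          with hφ
        have hφcont : Continuous φ := by
          apply (sigA_continuous (A.erase i) (kk + 1)).comp
          exact continuous_pi fun l =>
            (((continuous_const.sub continuous_id).mul continuous_const).add continuous_id)
        have hφ0 : φ 0 ≤ 0 := by
          have : (fun l => (1 - (0:ℝ)) * x l + 0) = x := by funext l; ring_nf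
          rw [hφ]
          simp only [this]
          exact hle
        have hcardA : k ≤ A.card := hx.card_le (by omega)
        have hφ1 : 0 < φ 1 := by
          have h1 : (fun l => (1 - (1:ℝ)) * x l + 1) = (fun _ => (1:ℝ)) := by
            funext l; ring_nf
          rw [hφ]
          simp only [h1]
          rw [sigA_const]
          have hch : 0 < (A.erase i).card.choose (kk + 1) := by
            apply Nat.choose_pos
            rw [Finset.card_erase_of_mem hi]
            omega
          have : (0:ℝ) < ((A.erase i).card.choose (kk + 1) : ℝ) := by exact_mod_cast hch
          simpa using this
        obtain ⟨s₀, hs₀mem, hs₀⟩ := intermediate_value_Icc (zero_le_one) hφcont.continuousOn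
          (Set.mem_Icc.2 ⟨hφ0, le_of_lt hφ1⟩)
        have hs₀ne1 : s₀ ≠ 1 := by
          intro h; rw [h] at hs₀; rw [hs₀] at hφ1; exact lt_irrefl 0 hφ1
        have hs₀lt1 : s₀ < 1 := lt_of_le_of_ne (Set.mem_Icc.1 hs₀mem).2 hs₀ne1
        have hs₀0 : 0 ≤ s₀ := (Set.mem_Icc.1 hs₀mem).1
        set ν : Fin n → ℝ := fun l => (1 - s₀) * x l + s₀ with hν
        -- ν ∈ GS A k
        have hνGS : GS A k ν := by
          intro j' hj'1 hj'k
          rw [hν, sigA_affine]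
          have h1s : 0 < 1 - s₀ := by linarith
          apply Finset.sum_pos'
          · intro m hm
            have hσnn : 0 ≤ sigA A m x := by
              rcases Nat.eq_zero_or_pos m with rfl | hm1
              · rw [sigA_zero]; norm_num
              · exact le_of_lt (hx m hm1 (by have := Finset.mem_range.1 hm; omega))
            have hC : (0:ℝ) ≤ ((A.card - m).choose (j' - m) : ℝ) := Nat.cast_nonneg _
            exact mul_nonneg (mul_nonneg (mul_nonneg hC (pow_nonneg (le_of_lt h1s) m))
              (pow_nonneg hs₀0 _)) hσnn
          · refine ⟨j', Finset.self_mem_range_succ j', ?_⟩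
            have hσ : 0 < sigA A j' x := hx j' hj'1 hj'k
            have hCeq : ((A.card - j').choose (j' - j') : ℝ) = 1 := by
              rw [Nat.sub_self, Nat.choose_zero_right, Nat.cast_one]
            rw [hCeq, Nat.sub_self, pow_zero, one_mul, mul_one]
            exact mul_pos (pow_pos h1s j') hσ
        -- sigA (A.erase i) (kk+1) ν = 0
        have hν0 : sigA (A.erase i) (kk + 1) ν = 0 := hs₀
        -- sigA (A.erase i) (kk+2) ν > 0
        have hνtop : 0 < sigA (A.erase i) (kk + 2) ν := by
          have herase := sigA_erase hi (kk + 1) ν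
          rw [hν0, mul_zero, add_zero] at herase
          rw [← herase]
          exact hνGS (kk + 2) (by omega) le_rfl
        -- sigA (A.erase i) kk ν > 0
        have hνlow : 0 < sigA (A.erase i) kk ν := by
          rcases Nat.eq_zero_or_pos kk with rfl | hkk1
          · rw [sigA_zero]; norm_num
          · have hν1 : GS A (kk + 1) ν := hνGS.mono (by omega)
            have := IH (kk + 1) (by omega) hν1 hi
            exact this kk hkk1 (by omega)
        -- contradiction
        rcases Nat.lt_or_ge (kk + 2) A.card with hlt | hge
        · -- newton applies on A.erase i at position kk+1
          have hnewt := sigA_newton (j := kk + 1) (B := A.erase i) (x := ν) (by omega)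
            (by rw [Finset.card_erase_of_mem hi]; omega) hν0
          rw [show kk + 1 - 1 = kk from rfl] at hnewt
          nlinarith [hnewt, hνlow, hνtop]
        · -- k = A.card : sigA (A.erase i) (kk+2) ν = 0, contradiction
          have hcard' : (A.erase i).card < kk + 2 := by
            rw [Finset.card_erase_of_mem hi]; omega
          rw [sigA_of_card_lt hcard' ν] at hνtop
          exact lt_irrefl 0 hνtop

/-- quadratic-over-linear inequality -/
lemma ql {X Y a b c : ℝ} (ha : 0 < a) (hb : 0 < b) (hc : a + b ≤ c) :
    (X + Y) ^ 2 / c ≤ X ^ 2 / a + Y ^ 2 / b := by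
  have hab : 0 < a + b := by linarith
  have hcpos : 0 < c := by linarith
  have h1 : (X + Y) ^ 2 / c ≤ (X + Y) ^ 2 / (a + b) := by
    apply div_le_div_of_nonneg_left (sq_nonneg _) hab hc
  have h2 : (X + Y) ^ 2 / (a + b) ≤ X ^ 2 / a + Y ^ 2 / b := by
    rw [div_add_div _ _ (ne_of_gt ha) (ne_of_gt hb), div_le_div_iff₀ hab (mul_pos ha hb)]
    nlinarith [sq_nonneg (X * b - Y * a), mul_pos ha hb]
  linarith

lemma sigA_ident {n : ℕ} (A : Finset (Fin n)) (K : ℕ) (v : Fin n → ℝ) :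
    ((K : ℝ) + 2) * sigA A (K + 2) v
      = sigA A 1 v * sigA A (K + 1) v - ∑ i ∈ A, (v i) ^ 2 * sigA (A.erase i) K v := by
  have he := sigA_euler A (K + 1) v
  have hstep : ∀ i ∈ A, v i * sigA (A.erase i) (K + 1) v
      = v i * sigA A (K + 1) v - (v i) ^ 2 * sigA (A.erase i) K v := by
    intro i hi
    have h := sigA_erase hi K v
    linear_combination (-(v i)) * h
  rw [Finset.sum_congr rfl hstep, Finset.sum_sub_distrib, ← Finset.sum_mul, ← sigA_one] at he
  rw [show K + 1 + 1 = K + 2 from rfl] at he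
  push_cast at he
  linarith [he]

lemma sup_ML {n : ℕ} : ∀ (k : ℕ), 1 ≤ k → ∀ (A : Finset (Fin n)) (x y : Fin n → ℝ),
    GS A (k - 1) x → GS A (k - 1) y → GS A (k - 1) (fun l => x l + y l) →
    sigA A k x / sigA A (k - 1) x + sigA A k y / sigA A (k - 1) y
      ≤ sigA A k (fun l => x l + y l) / sigA A (k - 1) (fun l => x l + y l) := by
  intro k
  induction k using Nat.strong_induction_on with
  | _ k IH =>
    match k, IH with
    | 0, _ => exact fun h => absurd h (by omega)
    | 1, _ =>
      intro _ A x y _ _ _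
      simp only [Nat.sub_self, sigA_zero, div_one, sigA_one]
      rw [← Finset.sum_add_distrib]
    | (K+2), IH =>
      intro _ A x y hx hy hz
      have hk1 : K + 2 - 1 = K + 1 := rfl
      rw [hk1] at hx hy hz ⊢
      set z := fun l => x l + y l with hzdef
      have hσx : 0 < sigA A (K + 1) x := hx (K + 1) (by omega) le_rfl
      have hσy : 0 < sigA A (K + 1) y := hy (K + 1) (by omega) le_rfl
      have hσz : 0 < sigA A (K + 1) z := hz (K + 1) (by omega) le_rfl
      -- W positivity
      have hW : ∀ (v : Fin n → ℝ), GS A (K + 1) v → ∀ i ∈ A, 0 < sigA (A.erase i) K v := by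
        intro v hv i hi
        rcases Nat.eq_zero_or_pos K with rfl | hK1
        · rw [sigA_zero]; norm_num
        · exact GS_del (K + 1) hv hi K hK1 (by omega)
      -- the identity in ratio form
      have idv : ∀ (v : Fin n → ℝ), 0 < sigA A (K + 1) v →
          ((K : ℝ) + 2) * (sigA A (K + 2) v / sigA A (K + 1) v)
            = sigA A 1 v - (∑ i ∈ A, (v i) ^ 2 * sigA (A.erase i) K v) / sigA A (K + 1) v := by
        intro v hv
        have hid := sigA_ident A K v
        field_simp
        nlinarith [hid]
      -- termwise inequality
      have hterm : ∀ i ∈ A,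
          (z i) ^ 2 * sigA (A.erase i) K z / sigA A (K + 1) z
            ≤ (x i) ^ 2 * sigA (A.erase i) K x / sigA A (K + 1) x
              + (y i) ^ 2 * sigA (A.erase i) K y / sigA A (K + 1) y := by
        intro i hi
        have hWx := hW x hx i hi
        have hWy := hW y hy i hi
        have hWz := hW z hz i hi
        have hax : 0 < sigA A (K + 1) x / sigA (A.erase i) K x := div_pos hσx hWx
        have hay : 0 < sigA A (K + 1) y / sigA (A.erase i) K y := div_pos hσy hWy
        -- a + b ≤ c via induction hypothesis
        have habc : sigA A (K + 1) x / sigA (A.erase i) K x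
            + sigA A (K + 1) y / sigA (A.erase i) K y
            ≤ sigA A (K + 1) z / sigA (A.erase i) K z := by
          have hGx : GS (A.erase i) K x := by
            have := GS_del (K + 1) hx hi; simpa using this
          have hGy : GS (A.erase i) K y := by
            have := GS_del (K + 1) hy hi; simpa using this
          have hGz : GS (A.erase i) K z := by
            have := GS_del (K + 1) hz hi; simpa using this
          have hIH := IH (K + 1) (by omega) (by omega) (A.erase i) x y
            (by rw [show K + 1 - 1 = K from rfl]; exact hGx)
            (by rw [show K + 1 - 1 = K from rfl]; exact hGy)
            (by rw [show K + 1 - 1 = K from rfl]; exact hGz)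
          rw [show K + 1 - 1 = K from rfl] at hIH
          -- decompose σ_{K+1}(A) via erase
          have hex := sigA_erase hi K x
          have hey := sigA_erase hi K y
          have hez := sigA_erase hi K z
          have hdx : sigA A (K + 1) x / sigA (A.erase i) K x
              = x i + sigA (A.erase i) (K + 1) x / sigA (A.erase i) K x := by
            rw [hex, add_div, mul_div_assoc, div_self (ne_of_gt hWx), mul_one, add_comm]
          have hdy : sigA A (K + 1) y / sigA (A.erase i) K y
              = y i + sigA (A.erase i) (K + 1) y / sigA (A.erase i) K y := by
            rw [hey, add_div, mul_div_assoc, div_self (ne_of_gt hWy), mul_one, add_comm]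
          have hdz : sigA A (K + 1) z / sigA (A.erase i) K z
              = z i + sigA (A.erase i) (K + 1) z / sigA (A.erase i) K z := by
            rw [hez, add_div, mul_div_assoc, div_self (ne_of_gt hWz), mul_one, add_comm]
          rw [hdx, hdy, hdz]
          have hzi : z i = x i + y i := rfl
          rw [hzi]
          linarith [hIH]
        have hql := ql (X := x i) (Y := y i) hax hay habc
        -- rewrite (v i)^2 * W / σ = (v i)^2 / (σ / W)
        have hrw : ∀ (v : Fin n → ℝ) (hv : 0 < sigA A (K + 1) v)
            (hw : 0 < sigA (A.erase i) K v),
            (v i) ^ 2 * sigA (A.erase i) K v / sigA A (K + 1) v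
              = (v i) ^ 2 / (sigA A (K + 1) v / sigA (A.erase i) K v) := by
          intro v hv hw
          rw [div_div_eq_mul_div, mul_div_assoc]
        rw [hrw x hσx hWx, hrw y hσy hWy, hrw z hσz hWz]
        have hzi : z i = x i + y i := rfl
        rw [hzi]
        exact hql
      -- sum up
      have hsum : (∑ i ∈ A, (z i) ^ 2 * sigA (A.erase i) K z) / sigA A (K + 1) z
          ≤ (∑ i ∈ A, (x i) ^ 2 * sigA (A.erase i) K x) / sigA A (K + 1) x
            + (∑ i ∈ A, (y i) ^ 2 * sigA (A.erase i) K y) / sigA A (K + 1) y := by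
        rw [Finset.sum_div, Finset.sum_div, Finset.sum_div, ← Finset.sum_add_distrib]
        apply Finset.sum_le_sum
        intro i hi
        exact hterm i hi
      -- conclude
      have hidx := idv x hσx
      have hidy := idv y hσy
      have hidz := idv z hσz
      have hadd1 : sigA A 1 z = sigA A 1 x + sigA A 1 y := by
        rw [sigA_one, sigA_one, sigA_one, ← Finset.sum_add_distrib]
      have hK2 : (0:ℝ) < (K : ℝ) + 2 := by positivity
      rw [← mul_le_mul_iff_right₀ hK2, mul_add, hidx, hidy, hidz, hadd1]
      linarith [hsum]

lemma GS_add {n : ℕ} : ∀ (k : ℕ) (A : Finset (Fin n)) (x y : Fin n → ℝ),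
    GS A k x → GS A k y → GS A k (fun l => x l + y l) := by
  intro k
  induction k with
  | zero => intro A x y _ _ j h1 h2; omega
  | succ K IHk =>
    intro A x y hx hy
    have hz : GS A K (fun l => x l + y l) := IHk A x y (hx.mono (by omega)) (hy.mono (by omega))
    intro j hj1 hjK
    rcases Nat.lt_or_ge j (K + 1) with hlt | hge
    · exact hz j hj1 (by omega)
    · have hjeq : j = K + 1 := by omega
      subst hjeq
      have hsup := sup_ML (K + 1) (by omega) A x y
        (by rw [show K + 1 - 1 = K from rfl]; exact hx.mono (by omega))
        (by rw [show K + 1 - 1 = K from rfl]; exact hy.mono (by omega))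
        (by rw [show K + 1 - 1 = K from rfl]; exact hz)
      rw [show K + 1 - 1 = K from rfl] at hsup
      have hσKx : 0 < sigA A K x := by
        rcases Nat.eq_zero_or_pos K with rfl | hK1
        · rw [sigA_zero]; norm_num
        · exact hx K hK1 (by omega)
      have hσKy : 0 < sigA A K y := by
        rcases Nat.eq_zero_or_pos K with rfl | hK1
        · rw [sigA_zero]; norm_num
        · exact hy K hK1 (by omega)
      have hσKz : 0 < sigA A K (fun l => x l + y l) := by
        rcases Nat.eq_zero_or_pos K with rfl | hK1
        · rw [sigA_zero]; norm_num
        · exact hz K hK1 (by omega)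
      have hFx : 0 < sigA A (K + 1) x / sigA A K x :=
        div_pos (hx (K + 1) (by omega) le_rfl) hσKx
      have hFy : 0 < sigA A (K + 1) y / sigA A K y :=
        div_pos (hy (K + 1) (by omega) le_rfl) hσKy
      have hFz : 0 < sigA A (K + 1) (fun l => x l + y l) / sigA A K (fun l => x l + y l) := by
        linarith
      calc (0:ℝ) < (sigA A (K + 1) (fun l => x l + y l) / sigA A K (fun l => x l + y l))
            * sigA A K (fun l => x l + y l) := mul_pos hFz hσKz
        _ = sigA A (K + 1) (fun l => x l + y l) := by
            rw [div_mul_cancel₀ _ (ne_of_gt hσKz)]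


/-- The `k`-th elementary symmetric function of `lam = (λ_1, …, λ_n) ∈ ℝ^n`. -/
noncomputable def esymm (n k : ℕ) (lam : Fin n → ℝ) : ℝ :=
  ∑ s ∈ Finset.univ.powersetCard k, ∏ i ∈ s, lam i

/-- The Gårding cone `Γ_k^+ = {λ ∈ ℝ^n : σ_j(λ) > 0 for j = 1, …, k}`. -/
def GammaPlus (n k : ℕ) : Set (Fin n → ℝ) :=
  {lam | ∀ j : ℕ, 1 ≤ j → j ≤ k → 0 < esymm n j lam}

/-- `Γ_k^+` is an open convex cone in `ℝ^n`. -/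
theorem gammaPlus_isOpen_convex_cone (n k : ℕ) (hn : 1 ≤ n) (hk1 : 1 ≤ k) (hk2 : k ≤ n) :
    IsOpen (GammaPlus n k) ∧ Convex ℝ (GammaPlus n k) ∧
      ∀ lam ∈ GammaPlus n k, ∀ t : ℝ, 0 < t → t • lam ∈ GammaPlus n k := by
  have hesymm : ∀ (j : ℕ) (lam : Fin n → ℝ), esymm n j lam = sigA Finset.univ j lam :=
    fun _ _ => rfl
  refine ⟨?_, ?_, ?_⟩
  · -- openness
    have heq : GammaPlus n k
        = ⋂ j ∈ Finset.Icc 1 k, {lam : Fin n → ℝ | 0 < sigA Finset.univ j lam} := by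
      ext lam
      simp only [Set.mem_iInter, Finset.mem_Icc, Set.mem_setOf_eq]
      constructor
      · intro h j hj
        exact h j hj.1 hj.2
      · intro h j h1 h2
        exact h j ⟨h1, h2⟩
    rw [heq]
    exact isOpen_biInter_finset fun j _ =>
      isOpen_lt continuous_const (sigA_continuous Finset.univ j)
  · -- convexity
    intro x hx y hy a b ha hb hab
    rcases eq_or_lt_of_le ha with ha0 | ha'
    · have hb1 : b = 1 := by linarith
      subst hb1
      rw [← ha0]
      simpa using hy
    rcases eq_or_lt_of_le hb with hb0 | hb'
    · have ha1 : a = 1 := by linarith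
      subst ha1
      rw [← hb0]
      simpa using hx
    · have hax : GS Finset.univ k (a • x) := GS_smul ha' (fun j h1 h2 => hx j h1 h2)
      have hby : GS Finset.univ k (b • y) := GS_smul hb' (fun j h1 h2 => hy j h1 h2)
      have hsum := GS_add k Finset.univ (a • x) (b • y) hax hby
      exact fun j h1 h2 => hsum j h1 h2
  · -- cone property
    intro lam hlam t ht
    have h : GS Finset.univ k lam := fun j h1 h2 => hlam j h1 h2
    have := GS_smul ht h
    exact fun j h1 h2 => this j h1 h2
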